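/- Let q be a coefficient family and set λ = q_0(0,2m). Then for all integers k, i with 0 ≤ k ≤ n/2, 0 ≤ i ≤ r and j := 2m + k − i satisfying 0 ≤ j ≤ r, one has binom(n,k)·q_k(i,j) = λ · Σ_{s = max(0, i−k)}^{min(2m, i)} (−1)^s · binom(2m,s) · binom(r−s, r−i) · binom(r−2m+s, r−j). -/

import Mathlib

open Finset

noncomputable section

/-- `famN r m = 2r - 4m`, the highest weight `n` of the target representation. -/
def famN (r m : ℕ) : ℤ := 2 * (r : ℤ) - 4 * (m : ℤ)

/-- A *coefficient family* for parameters `r, m`: a function `q k i j` (complex valued,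
indices integers) that vanishes whenever `(k,i,j)` is out of range
(`0 ≤ k ≤ n`, `0 ≤ i,j ≤ r`, where `n = 2r - 4m`) and satisfies the sl₂-compatibility
relations (R1), (R2), (R3) for all admissible indices. -/
def IsCoeffFamily (r m : ℕ) (q : ℤ → ℤ → ℤ → ℂ) : Prop :=
  (∀ k i j : ℤ,
      ¬(0 ≤ k ∧ k ≤ famN r m ∧ 0 ≤ i ∧ i ≤ (r : ℤ) ∧ 0 ≤ j ∧ j ≤ (r : ℤ)) →
      q k i j = 0) ∧
  (∀ k i j : ℤ, 0 ≤ k → k ≤ famN r m → 0 ≤ i → i ≤ (r : ℤ) → 0 ≤ j → j ≤ (r : ℤ) →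
      (k : ℂ) * q (k - 1) i j
        = ((i : ℂ) + 1) * q k (i + 1) j + ((j : ℂ) + 1) * q k i (j + 1)) ∧
  (∀ k i j : ℤ, 0 ≤ k → k ≤ famN r m → 0 ≤ i → i ≤ (r : ℤ) → 0 ≤ j → j ≤ (r : ℤ) →
      ((famN r m - k : ℤ) : ℂ) * q (k + 1) i j
        = (((r : ℤ) - i + 1 : ℤ) : ℂ) * q k (i - 1) j
          + (((r : ℤ) - j + 1 : ℤ) : ℂ) * q k i (j - 1)) ∧
  (∀ k i j : ℤ, 0 ≤ k → k ≤ famN r m → 0 ≤ i → i ≤ (r : ℤ) → 0 ≤ j → j ≤ (r : ℤ) →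
      ((famN r m - 2 * k - 2 * (r : ℤ) + 2 * i + 2 * j : ℤ) : ℂ) * q k i j = 0)

/-- Binomial coefficient `binom a b` for integers, interpreted as `0` when `b` is out of
the range `0 ≤ b ≤ a`, as a complex number. -/
def binomZ (a b : ℤ) : ℂ :=
  if 0 ≤ b ∧ b ≤ a then (Nat.choose a.toNat b.toNat : ℂ) else 0

/-- The *canonical coefficient family* with parameter `λ`: the coefficient family whose
level-0 component is `q₀ i j = (-1)^i * binom (2m) i * λ` if `i + j = 2m` and `0`
otherwise. -/
def IsCanonical (r m : ℕ) (lam : ℂ) (q : ℤ → ℤ → ℤ → ℂ) : Prop :=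
  IsCoeffFamily r m q ∧
  ∀ i j : ℤ, 0 ≤ i → i ≤ (r : ℤ) → 0 ≤ j → j ≤ (r : ℤ) →
    q 0 i j =
      if i + j = 2 * (m : ℤ) then (-1) ^ i.toNat * binomZ (2 * (m : ℤ)) i * lam else 0
lemma binomZ_neg (a b : ℤ) (h : b < 0) : binomZ a b = 0 :=
  if_neg (fun hc => absurd hc.1 (not_le.2 h))

lemma binomZ_gt (a b : ℤ) (h : a < b) : binomZ a b = 0 :=
  if_neg (fun hc => absurd hc.2 (not_le.2 h))

lemma binomZ_zero (a : ℤ) (h : 0 ≤ a) : binomZ a 0 = 1 := by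
  rw [binomZ, if_pos ⟨le_refl 0, h⟩]; simp

lemma binomZ_self (a : ℤ) (h : 0 ≤ a) : binomZ a a = 1 := by
  rw [binomZ, if_pos ⟨h, le_refl a⟩]; simp

lemma binomZ_succ (a b : ℤ) (ha : 0 ≤ a) :
    ((b : ℂ) + 1) * binomZ a (b + 1) = ((a - b : ℤ) : ℂ) * binomZ a b := by
  rcases lt_or_ge b 0 with hb | hb
  · rcases lt_or_ge (b + 1) 0 with hb1 | hb1
    · rw [binomZ_neg _ _ hb1, binomZ_neg _ _ hb]; ring
    · have hbe : b = -1 := by omega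
      subst hbe
      rw [binomZ_neg a (-1) (by norm_num)]
      push_cast; ring
  · rcases lt_or_ge a b with hab | hab
    · rw [binomZ_gt _ _ hab, binomZ_gt _ _ (by omega)]; ring
    · rcases eq_or_lt_of_le hab with heq | hlt
      · subst heq
        rw [binomZ_gt _ _ (by omega)]
        push_cast; ring
      · rw [binomZ, if_pos ⟨by omega, by omega⟩, binomZ, if_pos ⟨hb, hab⟩]
        obtain ⟨A, rfl⟩ := Int.eq_ofNat_of_zero_le ha
        obtain ⟨B, rfl⟩ := Int.eq_ofNat_of_zero_le hb
        have hBA : B + 1 ≤ A := by exact_mod_cast hlt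
        have h1 : ((B : ℤ) + 1).toNat = B + 1 := by omega
        rw [h1, Int.toNat_natCast, Int.toNat_natCast]
        have hch := Nat.choose_succ_right_eq A B
        have hc : ((A.choose (B + 1) : ℂ)) * (B + 1) = (A.choose B : ℂ) * ((A : ℂ) - B) := by
          have h2 : ((A - B : ℕ) : ℂ) = (A : ℂ) - B := by
            push_cast [Nat.cast_sub (le_of_lt hBA)]; ring
          calc ((A.choose (B + 1) : ℂ)) * (B + 1)
              = ((A.choose (B + 1) * (B + 1) : ℕ) : ℂ) := by push_cast; ring
            _ = ((A.choose B * (A - B) : ℕ) : ℂ) := by rw [hch]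
            _ = (A.choose B : ℂ) * ((A : ℂ) - B) := by push_cast [Nat.cast_sub (le_of_lt hBA)]; ring
        push_cast
        linear_combination hc

lemma binom_pair (a c b d : ℤ) (ha : 0 ≤ a) (hc : 0 ≤ c) :
    ((b : ℂ) + 1) * (binomZ a (b + 1) * binomZ c d)
      + ((d : ℂ) + 1) * (binomZ a b * binomZ c (d + 1))
      = (((a - b) + (c - d) : ℤ) : ℂ) * (binomZ a b * binomZ c d) := by
  have h1 := binomZ_succ a b ha
  have h2 := binomZ_succ c d hc
  push_cast at h1 h2 ⊢
  linear_combination binomZ c d * h1 + binomZ a b * h2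

/-- Single summand of the closed formula. -/
noncomputable def Tm (r m : ℕ) (k i s : ℤ) : ℂ :=
  (-1) ^ s.toNat * binomZ (2 * (m : ℤ)) s *
    binomZ ((r : ℤ) - s) ((r : ℤ) - i) *
    binomZ ((r : ℤ) - 2 * (m : ℤ) + s) ((r : ℤ) - (2 * (m : ℤ) + k - i))

/-- Full sum of the closed formula. -/
noncomputable def Gm (r m : ℕ) (k i : ℤ) : ℂ := ∑ s ∈ Finset.Icc (0 : ℤ) (2 * (m : ℤ)), Tm r m k i s

lemma Gm_rec (r m : ℕ) (hm : 2 * m ≤ r) (K i : ℤ) :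
    (((r : ℤ) - i + 1 : ℤ) : ℂ) * Gm r m K (i - 1)
      + (((r : ℤ) - (2 * (m : ℤ) + K + 1 - i) + 1 : ℤ) : ℂ) * Gm r m K i
      = ((K : ℂ) + 1) * Gm r m (K + 1) i := by
  have hmr : 2 * (m : ℤ) ≤ (r : ℤ) := by exact_mod_cast hm
  unfold Gm
  rw [Finset.mul_sum, Finset.mul_sum, Finset.mul_sum, ← Finset.sum_add_distrib]
  refine Finset.sum_congr rfl fun s hs => ?_
  simp only [Finset.mem_Icc] at hs
  unfold Tm
  have e1 : (r : ℤ) - (i - 1) = ((r : ℤ) - i) + 1 := by ring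
  have e2 : (r : ℤ) - (2 * (m : ℤ) + K - (i - 1)) = ((r : ℤ) - 2 * (m : ℤ) - K - 1 + i) := by ring
  have e3 : (r : ℤ) - (2 * (m : ℤ) + K - i) = ((r : ℤ) - 2 * (m : ℤ) - K - 1 + i) + 1 := by ring
  have e4 : (r : ℤ) - (2 * (m : ℤ) + (K + 1) - i) = ((r : ℤ) - 2 * (m : ℤ) - K - 1 + i) := by ring
  rw [e1, e2, e3, e4]
  have key := binom_pair ((r : ℤ) - s) ((r : ℤ) - 2 * (m : ℤ) + s)
      ((r : ℤ) - i) ((r : ℤ) - 2 * (m : ℤ) - K - 1 + i) (by omega) (by omega)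
  push_cast at key ⊢
  linear_combination ((-1) ^ s.toNat * binomZ (2 * (m : ℤ)) s) * key

/-- the closed formula for `q_k(i, 2m+k-i)` for `0 ≤ k ≤ n/2`. -/
theorem stmt3 (r m : ℕ) (hr : 2 ≤ r) (hm : 2 * m ≤ r)
    (q : ℤ → ℤ → ℤ → ℂ) (hq : IsCoeffFamily r m q) :
    ∀ k i : ℤ, 0 ≤ k → 2 * k ≤ famN r m → 0 ≤ i → i ≤ (r : ℤ) →
      0 ≤ 2 * (m : ℤ) + k - i → 2 * (m : ℤ) + k - i ≤ (r : ℤ) →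
      binomZ (famN r m) k * q k i (2 * (m : ℤ) + k - i)
        = q 0 0 (2 * (m : ℤ)) *
            ∑ s ∈ Finset.Icc (max 0 (i - k)) (min (2 * (m : ℤ)) i),
              (-1) ^ s.toNat * binomZ (2 * (m : ℤ)) s *
                binomZ ((r : ℤ) - s) ((r : ℤ) - i) *
                binomZ ((r : ℤ) - 2 * (m : ℤ) + s) ((r : ℤ) - (2 * (m : ℤ) + k - i)) := by
  obtain ⟨hv, h1, h2, h3⟩ := hq
  have hmr : 2 * (m : ℤ) ≤ (r : ℤ) := by exact_mod_cast hm
  have hn0 : (0 : ℤ) ≤ famN r m := by unfold famN; omega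
  set lam := q 0 0 (2 * (m : ℤ)) with hlam
  -- level-0 values
  have hq0 : ∀ I : ℕ, (I : ℤ) ≤ 2 * (m : ℤ) →
      q 0 (I : ℤ) (2 * (m : ℤ) - (I : ℤ)) = (-1) ^ I * binomZ (2 * (m : ℤ)) (I : ℤ) * lam := by
    intro I
    induction I with
    | zero =>
      intro _
      simp only [Nat.cast_zero, sub_zero, pow_zero, one_mul]
      rw [binomZ_zero _ (by omega)]
      rw [one_mul]
    | succ I ih =>
      intro hI
      have hI1 : (I : ℤ) + 1 ≤ 2 * (m : ℤ) := by exact_mod_cast hI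
      have hI' : (I : ℤ) ≤ 2 * (m : ℤ) := by omega
      have hrec := h1 0 (I : ℤ) (2 * (m : ℤ) - (I : ℤ) - 1) le_rfl hn0 (by positivity)
        (by omega) (by omega) (by omega)
      have hb := binomZ_succ (2 * (m : ℤ)) (I : ℤ) (by omega)
      have hih := ih hI'
      have hne : ((I : ℂ) + 1) ≠ 0 := by exact_mod_cast Nat.cast_add_one_ne_zero (R := ℂ) I
      have e1 : (2 * (m : ℤ) - (I : ℤ) - 1 + 1) = 2 * (m : ℤ) - (I : ℤ) := by ring
      rw [e1] at hrec
      push_cast at hrec ⊢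
      have goal2 : ((I : ℂ) + 1) * q 0 ((I : ℤ) + 1) (2 * (m : ℤ) - ((I : ℤ) + 1))
          = ((I : ℂ) + 1) * ((-1) ^ (I + 1) * binomZ (2 * (m : ℤ)) ((I : ℤ) + 1) * lam) := by
        have e2 : (2 * (m : ℤ) - ((I : ℤ) + 1)) = 2 * (m : ℤ) - (I : ℤ) - 1 := by ring
        rw [e2]
        push_cast at hb
        linear_combination (-1 : ℂ) * hrec - (2 * (m : ℂ) - I) * hih + (-1) ^ I * lam * hb
      exact mul_left_cancel₀ hne goal2
  -- level-0, integer version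
  have hq0Z : ∀ i : ℤ, 0 ≤ i → i ≤ 2 * (m : ℤ) →
      q 0 i (2 * (m : ℤ) - i) = (-1) ^ i.toNat * binomZ (2 * (m : ℤ)) i * lam := by
    intro i hi0 hi2
    have : i = (i.toNat : ℤ) := (Int.toNat_of_nonneg hi0).symm
    rw [this]
    exact hq0 i.toNat (by omega)
  -- main induction
  have key : ∀ K : ℕ, 2 * (K : ℤ) ≤ famN r m → ∀ i : ℤ,
      binomZ (famN r m) (K : ℤ) * q (K : ℤ) i (2 * (m : ℤ) + (K : ℤ) - i)
        = lam * Gm r m (K : ℤ) i := by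
    intro K
    induction K with
    | zero =>
      intro _ i
      simp only [Nat.cast_zero, add_zero]
      rw [binomZ_zero _ hn0, one_mul]
      rcases lt_or_ge i 0 with hi | hi
      · rw [hv 0 i _ (by omega)]
        have hG : Gm r m 0 i = 0 := Finset.sum_eq_zero fun s hs => by
          simp only [Finset.mem_Icc] at hs
          unfold Tm
          rw [binomZ_gt ((r : ℤ) - s) ((r : ℤ) - i) (by omega)]
          ring
        rw [hG]; ring
      · rcases lt_or_ge (2 * (m : ℤ)) i with hi2 | hi2
        · rw [hv 0 i _ (by omega)]
          have hG : Gm r m 0 i = 0 := Finset.sum_eq_zero fun s hs => by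
            simp only [Finset.mem_Icc] at hs
            unfold Tm
            rw [binomZ_gt ((r : ℤ) - 2 * (m : ℤ) + s) ((r : ℤ) - (2 * (m : ℤ) + 0 - i)) (by omega)]
            ring
          rw [hG]; ring
        · have hG : Gm r m 0 i = (-1) ^ i.toNat * binomZ (2 * (m : ℤ)) i := by
            unfold Gm
            rw [Finset.sum_eq_single i]
            · unfold Tm
              rw [binomZ_self ((r : ℤ) - i) (by omega)]
              rw [show (r : ℤ) - (2 * (m : ℤ) + 0 - i) = (r : ℤ) - 2 * (m : ℤ) + i from by ring]
              rw [binomZ_self ((r : ℤ) - 2 * (m : ℤ) + i) (by omega)]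
              ring
            · intro s hs hne
              simp only [Finset.mem_Icc] at hs
              unfold Tm
              rcases lt_or_gt_of_ne hne with h | h
              · rw [binomZ_gt ((r : ℤ) - 2 * (m : ℤ) + s) ((r : ℤ) - (2 * (m : ℤ) + 0 - i)) (by omega)]
                ring
              · rw [binomZ_gt ((r : ℤ) - s) ((r : ℤ) - i) (by omega)]
                ring
            · intro habs
              exact absurd (Finset.mem_Icc.2 ⟨hi, hi2⟩) habs
          rw [hG, hq0Z i hi hi2]
          ring
    | succ K ih =>
      intro hK i
      have hKn : 2 * ((K : ℤ) + 1) ≤ famN r m := by push_cast at hK; omega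
      have hK' : 2 * (K : ℤ) ≤ famN r m := by omega
      have ihK := ih hK'
      by_cases hA : 0 ≤ i ∧ i ≤ (r : ℤ) ∧ 0 ≤ 2 * (m : ℤ) + ((K : ℤ) + 1) - i ∧
          2 * (m : ℤ) + ((K : ℤ) + 1) - i ≤ (r : ℤ)
      · obtain ⟨hi0, hir, hj0, hjr⟩ := hA
        have hrec := h2 (K : ℤ) i (2 * (m : ℤ) + ((K : ℤ) + 1) - i) (by positivity)
          (by omega) hi0 hir hj0 hjr
        have hihA := ihK (i - 1)
        have hihB := ihK i
        have hb := binomZ_succ (famN r m) (K : ℤ) hn0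
        have hGrec := Gm_rec r m hm (K : ℤ) i
        have hne : ((K : ℂ) + 1) ≠ 0 := Nat.cast_add_one_ne_zero K
        rw [show 2 * (m : ℤ) + (K : ℤ) - (i - 1) = 2 * (m : ℤ) + ((K : ℤ) + 1) - i from by ring]
          at hihA
        rw [show 2 * (m : ℤ) + (K : ℤ) - i = 2 * (m : ℤ) + ((K : ℤ) + 1) - i - 1 from by ring]
          at hihB
        apply mul_left_cancel₀ hne
        push_cast
        push_cast at hrec hihA hihB hb hGrec
        linear_combination q ((K : ℤ) + 1) i (2 * (m : ℤ) + ((K : ℤ) + 1) - i) * hb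
          + binomZ (famN r m) (K : ℤ) * hrec
          + ((r : ℂ) - (i : ℂ) + 1) * hihA
          + ((r : ℂ) - (2 * (m : ℂ) + ((K : ℂ) + 1) - (i : ℂ)) + 1) * hihB
          + lam * hGrec
      · push_cast
        rw [hv ((K : ℤ) + 1) i (2 * (m : ℤ) + ((K : ℤ) + 1) - i) (by push_cast at hA; omega)]
        have hG : Gm r m ((K : ℤ) + 1) i = 0 := Finset.sum_eq_zero fun s hs => by
          simp only [Finset.mem_Icc] at hs
          unfold Tm
          push_cast at hA
          rcases lt_or_ge i 0 with h | h
          · rw [binomZ_gt ((r : ℤ) - s) ((r : ℤ) - i) (by omega)]; ring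
          rcases lt_or_ge (r : ℤ) i with h2' | h2'
          · rw [binomZ_neg ((r : ℤ) - s) ((r : ℤ) - i) (by omega)]; ring
          rcases lt_or_ge (2 * (m : ℤ) + ((K : ℤ) + 1) - i) 0 with h3' | h3'
          · rw [binomZ_gt ((r : ℤ) - 2 * (m : ℤ) + s)
              ((r : ℤ) - (2 * (m : ℤ) + ((K : ℤ) + 1) - i)) (by omega)]; ring
          · rw [binomZ_neg ((r : ℤ) - 2 * (m : ℤ) + s)
              ((r : ℤ) - (2 * (m : ℤ) + ((K : ℤ) + 1) - i)) (by omega)]; ring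
        rw [hG]; ring
  -- conclude
  intro k i hk0 hk2 hi0 hir hj0 hjr
  have hkey := key k.toNat (by rwa [Int.toNat_of_nonneg hk0]) i
  rw [Int.toNat_of_nonneg hk0] at hkey
  rw [hkey]
  congr 1
  unfold Gm Tm
  refine (Finset.sum_subset ?_ ?_).symm
  · intro s hs
    simp only [Finset.mem_Icc] at hs ⊢
    exact ⟨le_trans (le_max_left _ _) hs.1, le_trans hs.2 (min_le_left _ _)⟩
  · intro s hs hns
    simp only [Finset.mem_Icc] at hs hns
    have hcase : s < i - k ∨ i < s := by
      by_contra hc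
      push_neg at hc
      exact hns ⟨max_le hs.1 hc.1, le_min hs.2 hc.2⟩
    rcases hcase with h | h
    · rw [binomZ_gt ((r : ℤ) - 2 * (m : ℤ) + s) ((r : ℤ) - (2 * (m : ℤ) + k - i)) (by omega)]
      ring
    · rw [binomZ_gt ((r : ℤ) - s) ((r : ℤ) - i) (by omega)]
      ring
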